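/- Let ω be a centered non-degenerate random variable with E[e^{3βω}] < ∞ for fixed β > 0, set c_β := e^{λ(2β)-2λ(β)} - 1 and ξ := exp(βω - λ(β) + h) - 1. Then with the choice a = 1/c_β there exist constants C > 0 and h_0 > 0 such that for all h ∈ (0, h_0): |E[log(1 + a·h·ξ)] - (a h² - c_β a² h²/2)| ≤ C h³. In particular E[log(1 + a h ξ)] ≥ h²/(4 c_β) for h small. -/

import Mathlib

open MeasureTheory Real Set

lemma aux_log_taylor {x : ℝ} (hx : -(1/2) ≤ x) :
    |Real.log (1+x) - (x - x^2/2)| ≤ 8 * |x|^3 := by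
  rcases le_or_gt x (1/2) with hx2 | hx2
  · have haxle : |x| ≤ 1/2 := abs_le.mpr ⟨by linarith, hx2⟩
    have hax : |(-x)| < 1 := by rw [abs_neg]; linarith
    have h := Real.abs_log_sub_add_sum_range_le (x := -x) hax 2
    simp [Finset.sum_range_succ] at h
    have he : Real.log (1 + x) - (x - x^2/2) = -x + x ^ 2 / (1 + 1) + Real.log (1 + x) := by ring
    rw [he]
    have h2 : |x| ^ 3 / (1 - |x|) ≤ 8 * |x|^3 := by
      rw [div_le_iff₀ (by linarith : (0:ℝ) < 1 - |x|)]
      nlinarith [abs_nonneg x, pow_nonneg (abs_nonneg x) 3]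
    linarith
  · have hpos : (0:ℝ) < 1 + x := by linarith
    have hl1 : Real.log (1+x) ≤ x := by
      have := Real.log_le_sub_one_of_pos hpos; linarith
    have hl0 : 0 ≤ Real.log (1+x) := Real.log_nonneg (by linarith)
    rw [abs_of_pos (by linarith : (0:ℝ) < x), abs_le]
    constructor <;> nlinarith

lemma aux_exp_taylor2 {x : ℝ} (h0 : 0 ≤ x) (h1 : x ≤ 1) : |Real.exp x - (1 + x)| ≤ x^2 := by
  have h := Real.exp_bound (x := x) (by rw [abs_of_nonneg h0]; exact h1) (n := 2) (by norm_num)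
  simp [Finset.sum_range_succ, abs_of_nonneg h0] at h
  rw [abs_le] at h ⊢
  constructor <;> nlinarith

lemma aux_exp_taylor1 {x : ℝ} (h1 : |x| ≤ 1) : |Real.exp x - 1| ≤ 2*|x| := by
  have h := Real.exp_bound (x := x) h1 (n := 1) (by norm_num)
  simp [Finset.sum_range_succ] at h
  linarith

lemma aux_cube {u : ℝ} (hu : 0 ≤ u) : |u - 1|^3 ≤ 4*u^3 + 4 := by
  have h1 : |u-1| ≤ u + 1 := abs_le.mpr ⟨by linarith, by linarith⟩
  calc |u-1|^3 ≤ (u+1)^3 := pow_le_pow_left₀ (abs_nonneg _) h1 3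
    _ ≤ 4*u^3+4 := by nlinarith [sq_nonneg (u-1)]

lemma aux_abs3 (A B C : ℝ) : |A - B + C| ≤ |A| + |B| + |C| := by
  calc |A - B + C| ≤ |A - B| + |C| := abs_add_le _ _
    _ ≤ |A| + |B| + |C| := by
        have h : |A - B| ≤ |A| + |B| := by
          rw [sub_eq_add_neg]; simpa using abs_add_le A (-B)
        linarith

/-- Cumulant generating function `λ(t) = log E[e^{tW}]`. -/
noncomputable def cumulant {Ω : Type*} [MeasureSpace Ω] (W : Ω → ℝ) (t : ℝ) : ℝ :=
  Real.log (∫ ω, Real.exp (t * W ω))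

/-- `ξ = exp(βω - λ(β) + h) - 1`. -/
noncomputable def xiRV {Ω : Type*} [MeasureSpace Ω] (W : Ω → ℝ) (β h : ℝ) (ω : Ω) : ℝ :=
  Real.exp (β * W ω - cumulant W β + h) - 1

/-- `c_β = e^{λ(2β) - 2λ(β)} - 1`. -/
noncomputable def cBeta {Ω : Type*} [MeasureSpace Ω] (W : Ω → ℝ) (β : ℝ) : ℝ :=
  Real.exp (cumulant W (2 * β) - 2 * cumulant W β) - 1

set_option maxHeartbeats 1000000 in
theorem stmt_18 {Ω : Type*} [MeasureSpace Ω] [IsProbabilityMeasure (volume : Measure Ω)]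
    (W : Ω → ℝ) (β : ℝ) (hβ : 0 < β)
    (hintW : Integrable W) (hmean : ∫ ω, W ω = 0)
    (hnd : ¬ (∀ᵐ ω, W ω = 0))
    (hexp : ∀ t : ℝ, t ∈ Set.Icc 0 (3 * β) → Integrable (fun ω => Real.exp (t * W ω))) :
    ∃ C > (0 : ℝ), ∃ h0 > (0 : ℝ), ∀ h ∈ Set.Ioo (0 : ℝ) h0,
      |(∫ ω, Real.log (1 + (1 / cBeta W β) * h * xiRV W β h ω))
          - ((1 / cBeta W β) * h ^ 2 - cBeta W β * (1 / cBeta W β) ^ 2 * h ^ 2 / 2)|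
        ≤ C * h ^ 3 ∧
      h ^ 2 / (4 * cBeta W β)
        ≤ ∫ ω, Real.log (1 + (1 / cBeta W β) * h * xiRV W β h ω) := by
  have hβ0 : (0:ℝ) ≤ β := hβ.le
  have hint1 : Integrable (fun ω => Real.exp (β * W ω)) := hexp β ⟨hβ0, by linarith⟩
  have hint2 : Integrable (fun ω => Real.exp (2*β * W ω)) := hexp (2*β) ⟨by linarith, by linarith⟩
  have hint3 : Integrable (fun ω => Real.exp (3*β * W ω)) := hexp (3*β) ⟨by linarith, le_refl _⟩
  set Z₁ := ∫ ω, Real.exp (β * W ω) with hZ1_def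
  set Z₂ := ∫ ω, Real.exp (2*β * W ω) with hZ2_def
  set Z₃ := ∫ ω, Real.exp (3*β * W ω) with hZ3_def
  have hZ1 : 0 < Z₁ := by
    simpa [ProbabilityTheory.mgf, hZ1_def] using ProbabilityTheory.mgf_pos (X := W) (t := β) hint1
  have hZ2 : 0 < Z₂ := by
    simpa [ProbabilityTheory.mgf, hZ2_def] using
      ProbabilityTheory.mgf_pos (X := W) (t := 2*β) hint2
  have hZ3 : 0 < Z₃ := by
    simpa [ProbabilityTheory.mgf, hZ3_def] using
      ProbabilityTheory.mgf_pos (X := W) (t := 3*β) hint3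
  have hsq : ∀ y : ℝ, Real.exp y ^ 2 = Real.exp (2*y) := by
    intro y; rw [sq, ← Real.exp_add, two_mul]
  have hcb : ∀ y : ℝ, Real.exp y ^ 3 = Real.exp (3*y) := by
    intro y; rw [show (3:ℝ)*y = y + y + y by ring, Real.exp_add, Real.exp_add]; ring
  set c := cBeta W β with hc_def
  have hc_eq : c = Z₂ / Z₁^2 - 1 := by
    rw [hc_def]; unfold cBeta cumulant
    rw [← hZ1_def, ← hZ2_def, Real.exp_sub, two_mul, Real.exp_add, Real.exp_log hZ1,
      Real.exp_log hZ2, sq]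
  -- strict variance positivity
  have hXsq_eq : (fun ω => (Real.exp (β*W ω) - Z₁)^2)
      = fun ω => Real.exp (2*β*W ω) - (2*Z₁) * Real.exp (β*W ω) + Z₁^2 := by
    funext ω
    have h1 : Real.exp (2*β*W ω) = Real.exp (β*W ω)^2 := by rw [mul_assoc]; exact (hsq _).symm
    rw [h1]; ring
  have hXsq_int : Integrable (fun ω => (Real.exp (β*W ω) - Z₁)^2) := by
    rw [hXsq_eq]
    exact Integrable.add (hint2.sub (hint1.const_mul _)) (integrable_const _)
  have hintA : Integrable (fun ω => Real.exp (2*β*W ω) - 2*Z₁ * Real.exp (β*W ω)) :=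
    hint2.sub (hint1.const_mul _)
  have hvar_eq : ∫ ω, (Real.exp (β*W ω) - Z₁)^2 = Z₂ - Z₁^2 := by
    rw [hXsq_eq, integral_add hintA (integrable_const _),
      integral_sub hint2 (hint1.const_mul _), integral_const_mul, integral_const]
    simp [measure_univ]
    ring
  have hvarpos : 0 < Z₂ - Z₁^2 := by
    rw [← hvar_eq]
    rcases (integral_nonneg (f := fun ω => (Real.exp (β*W ω) - Z₁)^2) (fun ω => sq_nonneg _)).lt_or_eq with hlt | heq
    · exact hlt
    · exfalso
      have hae := (integral_eq_zero_iff_of_nonneg (fun ω => sq_nonneg _) hXsq_int).mp heq.symm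
      have hW : ∀ᵐ ω, W ω = Real.log Z₁ / β := by
        filter_upwards [hae] with ω hω
        have h0 : (Real.exp (β*W ω) - Z₁)^2 = 0 := hω
        have h2 : Real.exp (β*W ω) = Z₁ := by nlinarith [h0]
        have h3 : β * W ω = Real.log Z₁ := by rw [← Real.log_exp (β*W ω), h2]
        rw [eq_div_iff hβ.ne', mul_comm]; exact h3
      have hintc : ∫ ω, W ω = Real.log Z₁ / β := by
        rw [integral_congr_ae hW, integral_const]; simp [measure_univ]
      rw [hmean] at hintc
      have hlz : Real.log Z₁ = 0 := by
        field_simp at hintc; simpa using hintc.symm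
      exact hnd (by filter_upwards [hW] with ω hω; rw [hω, hlz, zero_div])
  have hc_pos : 0 < c := by
    rw [hc_eq, sub_pos, lt_div_iff₀ (by positivity)]; linarith
  set a := 1 / c with ha_def
  have ha_pos : 0 < a := by rw [ha_def]; positivity
  set M := Z₃ / Z₁^3 with hM_def
  have hM : 0 < M := by positivity
  set K := 4*Real.exp 3*M + 4 with hK_def
  have hK : 0 < K := by positivity
  set C := a + a^2*(2*c+4) + 8*a^3*K with hC_def
  have hC : 0 < C := by positivity
  refine ⟨C, hC, min (min (1/2) (c/2)) (1/(4*c*C)), by positivity, fun h hh => ?_⟩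
  obtain ⟨hh1, hh2⟩ := hh
  have hhalf : h ≤ 1/2 := hh2.le.trans ((min_le_left _ _).trans (min_le_left _ _))
  have hhc : h ≤ c/2 := hh2.le.trans ((min_le_left _ _).trans (min_le_right _ _))
  have hhC : h ≤ 1/(4*c*C) := hh2.le.trans (min_le_right _ _)
  have hah : a * h ≤ 1/2 := by
    rw [ha_def]
    rw [div_mul_eq_mul_div, one_mul, div_le_iff₀ hc_pos]
    linarith
  have hah0 : 0 ≤ a * h := by positivity
  set s := Real.exp h / Z₁ with hs_def
  have hs : 0 < s := by positivity
  have hxieq : ∀ ω, xiRV W β h ω = s * Real.exp (β * W ω) - 1 := by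
    intro ω; unfold xiRV cumulant
    rw [← hZ1_def, Real.exp_add, Real.exp_sub, Real.exp_log hZ1, hs_def]
    ring
  simp only [hxieq]
  have hint_f : Integrable (fun ω => s * Real.exp (β*W ω) - 1) :=
    (hint1.const_mul s).sub (integrable_const 1)
  have I1 : ∫ ω, (s * Real.exp (β*W ω) - 1) = Real.exp h - 1 := by
    rw [integral_sub (hint1.const_mul s) (integrable_const 1), integral_const_mul, integral_const]
    simp [measure_univ]
    rw [hs_def]; field_simp
    exact hZ1_def.symm
  have hf2 : ∀ ω : Ω, (s*Real.exp (β*W ω) - 1)^2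
      = s^2 * Real.exp (2*β*W ω) - 2*s*Real.exp (β*W ω) + 1 := by
    intro ω
    have h1 : Real.exp (2*β*W ω) = Real.exp (β*W ω)^2 := by rw [mul_assoc]; exact (hsq _).symm
    rw [h1]; ring
  have hint_f2a : Integrable (fun ω => s^2 * Real.exp (2*β*W ω) - 2*s*Real.exp (β*W ω)) :=
    (hint2.const_mul _).sub (hint1.const_mul _)
  have hint_f2 : Integrable (fun ω => (s*Real.exp (β*W ω) - 1)^2) := by
    simp only [hf2]; exact hint_f2a.add (integrable_const 1)
  have I2 : ∫ ω, (s*Real.exp (β*W ω) - 1)^2 = (Real.exp h)^2 * (1+c) - 2*Real.exp h + 1 := by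
    simp only [hf2]
    rw [integral_add hint_f2a (integrable_const 1),
      integral_sub (hint2.const_mul _) (hint1.const_mul _), integral_const_mul, integral_const_mul,
      integral_const]
    simp [measure_univ]
    rw [hs_def, hc_eq]
    field_simp
    rw [← hZ1_def, ← hZ2_def]; ring
  -- pointwise remainder bound
  have hRb : ∀ ω : Ω, |Real.log (1 + a*h*(s*Real.exp (β*W ω) - 1))
        - (a*h*(s*Real.exp (β*W ω) - 1) - (a*h*(s*Real.exp (β*W ω) - 1))^2/2)|
      ≤ 8*(a*h)^3 * (4 * (s^3*Real.exp (3*β*W ω)) + 4) := by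
    intro ω
    have hu : 0 < s * Real.exp (β*W ω) := by positivity
    have hx : -(1/2) ≤ a*h*(s*Real.exp (β*W ω) - 1) := by
      have hprod : 0 ≤ a*h*(s*Real.exp (β*W ω)) := mul_nonneg hah0 hu.le
      have hexpand : a*h*(s*Real.exp (β*W ω) - 1) = a*h*(s*Real.exp (β*W ω)) - a*h := by ring
      rw [hexpand]; linarith
    have hlt := aux_log_taylor hx
    have habsx : |a*h*(s*Real.exp (β*W ω) - 1)|^3 = (a*h)^3 * |s*Real.exp (β*W ω) - 1|^3 := by
      rw [abs_mul, abs_of_nonneg hah0, mul_pow]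
    have hcube : |s*Real.exp (β*W ω) - 1|^3 ≤ 4*(s^3 * Real.exp (3*β*W ω)) + 4 := by
      have hc1 := aux_cube hu.le
      have he3 : (s*Real.exp (β*W ω))^3 = s^3 * Real.exp (3*β*W ω) := by
        rw [mul_pow, hcb (β*W ω), ← mul_assoc]
      calc |s*Real.exp (β*W ω) - 1|^3 ≤ 4*(s*Real.exp (β*W ω))^3 + 4 := hc1
        _ = 4*(s^3 * Real.exp (3*β*W ω)) + 4 := by rw [he3]
    calc |Real.log (1 + a*h*(s*Real.exp (β*W ω) - 1))
          - (a*h*(s*Real.exp (β*W ω) - 1) - (a*h*(s*Real.exp (β*W ω) - 1))^2/2)|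
        ≤ 8*|a*h*(s*Real.exp (β*W ω) - 1)|^3 := hlt
      _ = 8*((a*h)^3 * |s*Real.exp (β*W ω) - 1|^3) := by rw [habsx]
      _ ≤ 8*((a*h)^3 * (4*(s^3*Real.exp (3*β*W ω)) + 4)) := by
          have := mul_le_mul_of_nonneg_left hcube (pow_nonneg hah0 3)
          linarith
      _ = 8*(a*h)^3 * (4*(s^3*Real.exp (3*β*W ω)) + 4) := by ring
  -- measurability and integrability of remainder
  have hWm : AEMeasurable W (volume : Measure Ω) := hintW.aemeasurable
  have hexpm : AEMeasurable (fun ω => Real.exp (β * W ω)) (volume : Measure Ω) :=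
    Real.measurable_exp.comp_aemeasurable (hWm.const_mul β)
  have hlinm : AEMeasurable (fun ω => a*h*(s*Real.exp (β*W ω) - 1)) (volume : Measure Ω) :=
    ((hexpm.const_mul s).sub aemeasurable_const).const_mul (a*h)
  have hRm : AEStronglyMeasurable (fun ω => Real.log (1 + a*h*(s*Real.exp (β*W ω) - 1))
      - (a*h*(s*Real.exp (β*W ω) - 1) - (a*h*(s*Real.exp (β*W ω) - 1))^2/2))
      (volume : Measure Ω) := by
    apply AEMeasurable.aestronglyMeasurable
    exact (Real.measurable_log.comp_aemeasurable (hlinm.const_add 1)).sub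
      (hlinm.sub ((hlinm.pow_const 2).div_const 2))
  have hG_int : Integrable (fun ω => 8*(a*h)^3 * (4*(s^3*Real.exp (3*β*W ω)) + 4)) :=
    (((hint3.const_mul (s^3)).const_mul 4).add (integrable_const 4)).const_mul _
  have hR_int : Integrable (fun ω => Real.log (1 + a*h*(s*Real.exp (β*W ω) - 1))
      - (a*h*(s*Real.exp (β*W ω) - 1) - (a*h*(s*Real.exp (β*W ω) - 1))^2/2)) := by
    refine Integrable.mono' hG_int hRm (ae_of_all _ fun ω => ?_)
    rw [Real.norm_eq_abs]; exact hRb ω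
  have hlin_eq : (fun ω => a*h*(s*Real.exp (β*W ω) - 1) - (a*h*(s*Real.exp (β*W ω) - 1))^2/2)
      = fun ω => a*h*(s*Real.exp (β*W ω) - 1) - ((a*h)^2/2)*((s*Real.exp (β*W ω) - 1)^2) := by
    funext ω; ring
  have hint_lin : Integrable
      (fun ω => a*h*(s*Real.exp (β*W ω) - 1) - (a*h*(s*Real.exp (β*W ω) - 1))^2/2) := by
    rw [hlin_eq]; exact (hint_f.const_mul _).sub (hint_f2.const_mul _)
  have Ilin : ∫ ω, (a*h*(s*Real.exp (β*W ω) - 1) - (a*h*(s*Real.exp (β*W ω) - 1))^2/2)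
      = a*h*(Real.exp h - 1) - ((a*h)^2/2)*((Real.exp h)^2*(1+c) - 2*Real.exp h + 1) := by
    rw [hlin_eq, integral_sub (hint_f.const_mul _) (hint_f2.const_mul _), integral_const_mul,
      integral_const_mul, I1, I2]
  have hlog_int_eq : ∫ ω, Real.log (1 + a*h*(s*Real.exp (β*W ω) - 1))
      = (a*h*(Real.exp h - 1) - ((a*h)^2/2)*((Real.exp h)^2*(1+c) - 2*Real.exp h + 1))
        + ∫ ω, (Real.log (1 + a*h*(s*Real.exp (β*W ω) - 1))
          - (a*h*(s*Real.exp (β*W ω) - 1) - (a*h*(s*Real.exp (β*W ω) - 1))^2/2)) := by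
    rw [← Ilin, ← integral_add hint_lin hR_int]
    congr 1; funext ω; ring
  -- bound on the remainder integral
  have hs3 : s^3*Z₃ = (Real.exp h)^3 * M := by
    rw [hs_def, hM_def]; field_simp
  have hexp3 : (Real.exp h)^3 ≤ Real.exp 3 := by
    rw [hcb]; exact Real.exp_le_exp.mpr (by linarith)
  have hIRb : |∫ ω, (Real.log (1 + a*h*(s*Real.exp (β*W ω) - 1))
      - (a*h*(s*Real.exp (β*W ω) - 1) - (a*h*(s*Real.exp (β*W ω) - 1))^2/2))|
      ≤ 8*a^3*K*h^3 := by
    have step1 : |∫ ω, (Real.log (1 + a*h*(s*Real.exp (β*W ω) - 1))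
        - (a*h*(s*Real.exp (β*W ω) - 1) - (a*h*(s*Real.exp (β*W ω) - 1))^2/2))|
        ≤ ∫ ω, |Real.log (1 + a*h*(s*Real.exp (β*W ω) - 1))
        - (a*h*(s*Real.exp (β*W ω) - 1) - (a*h*(s*Real.exp (β*W ω) - 1))^2/2)| := by
      exact abs_integral_le_integral_abs
    have step2 : ∫ ω, |Real.log (1 + a*h*(s*Real.exp (β*W ω) - 1))
        - (a*h*(s*Real.exp (β*W ω) - 1) - (a*h*(s*Real.exp (β*W ω) - 1))^2/2)|
        ≤ ∫ ω, 8*(a*h)^3 * (4*(s^3*Real.exp (3*β*W ω)) + 4) :=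
      integral_mono hR_int.abs hG_int (fun ω => hRb ω)
    have step3 : ∫ ω, 8*(a*h)^3 * (4*(s^3*Real.exp (3*β*W ω)) + 4)
        = 8*(a*h)^3 * (4*(s^3*Z₃) + 4) := by
      rw [integral_const_mul, integral_add ((hint3.const_mul (s^3)).const_mul 4)
        (integrable_const 4), integral_const_mul, integral_const_mul, integral_const]
      simp [measure_univ]
      exact Or.inl (Or.inl hZ3_def.symm)
    have step4 : 8*(a*h)^3 * (4*(s^3*Z₃) + 4) ≤ 8*a^3*K*h^3 := by
      rw [hs3]
      have hinner : 4*((Real.exp h)^3*M) + 4 ≤ K := by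
        rw [hK_def]
        have := mul_le_mul_of_nonneg_right hexp3 hM.le
        linarith
      have houter : 8*(a*h)^3 * (4*((Real.exp h)^3*M) + 4) ≤ 8*(a*h)^3 * K := by
        have := mul_le_mul_of_nonneg_left hinner
          (by positivity : (0:ℝ) ≤ 8*(a*h)^3)
        linarith
      calc 8*(a*h)^3 * (4*((Real.exp h)^3*M) + 4) ≤ 8*(a*h)^3 * K := houter
        _ = 8*a^3*K*h^3 := by ring
    exact ((step1.trans step2).trans (le_of_eq step3)).trans step4
  -- Taylor bounds for exp terms
  have hE1 : |Real.exp h - 1 - h| ≤ h^2 := by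
    have := aux_exp_taylor2 hh1.le (by linarith : h ≤ 1)
    have heq : Real.exp h - 1 - h = Real.exp h - (1+h) := by ring
    rw [heq]; exact this
  have hE2 : |(Real.exp h)^2*(1+c) - 2*Real.exp h + 1 - c| ≤ (4*c+8)*h := by
    have h2h : |Real.exp (2*h) - 1| ≤ 4*h := by
      have := aux_exp_taylor1 (x := 2*h) (by rw [abs_of_nonneg (by linarith : (0:ℝ) ≤ 2*h)]; linarith)
      rw [abs_of_nonneg (by linarith : (0:ℝ) ≤ 2*h)] at this
      linarith
    have h1h : |Real.exp h - 1| ≤ 2*h := by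
      have := aux_exp_taylor1 (x := h) (by rw [abs_of_nonneg hh1.le]; linarith)
      rw [abs_of_nonneg hh1.le] at this
      linarith
    rw [hsq h, show Real.exp (2*h)*(1+c) - 2*Real.exp h + 1 - c
      = (1+c)*(Real.exp (2*h)-1) - 2*(Real.exp h - 1) from by ring]
    have habs : |(1+c)*(Real.exp (2*h)-1) - 2*(Real.exp h - 1)|
        ≤ |(1+c)*(Real.exp (2*h)-1)| + |2*(Real.exp h - 1)| := by
      rw [sub_eq_add_neg]
      exact (abs_add_le _ _).trans (by rw [abs_neg])
    have hb1 : |(1+c)*(Real.exp (2*h)-1)| ≤ (1+c)*(4*h) := by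
      rw [abs_mul, abs_of_nonneg (by linarith : (0:ℝ) ≤ 1+c)]
      exact mul_le_mul_of_nonneg_left h2h (by linarith)
    have hb2 : |2*(Real.exp h - 1)| ≤ 2*(2*h) := by
      rw [abs_mul, abs_of_nonneg (by norm_num : (0:ℝ) ≤ 2)]
      exact mul_le_mul_of_nonneg_left h1h (by norm_num)
    calc |(1+c)*(Real.exp (2*h)-1) - 2*(Real.exp h - 1)|
        ≤ (1+c)*(4*h) + 2*(2*h) := by linarith
      _ = (4*c+8)*h := by ring
  -- final assembly
  have key : (∫ ω, Real.log (1 + a*h*(s*Real.exp (β*W ω) - 1))) - (a*h^2 - c*a^2*h^2/2)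
      = a*h*(Real.exp h - 1 - h) - (a^2*h^2/2)*((Real.exp h)^2*(1+c) - 2*Real.exp h + 1 - c)
        + ∫ ω, (Real.log (1 + a*h*(s*Real.exp (β*W ω) - 1))
          - (a*h*(s*Real.exp (β*W ω) - 1) - (a*h*(s*Real.exp (β*W ω) - 1))^2/2)) := by
    rw [hlog_int_eq]; ring
  have b1 : |a*h*(Real.exp h - 1 - h)| ≤ a*h^3 := by
    rw [abs_mul, abs_of_nonneg hah0]
    calc (a*h)*|Real.exp h - 1 - h| ≤ (a*h)*h^2 := mul_le_mul_of_nonneg_left hE1 hah0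
      _ = a*h^3 := by ring
  have b2 : |(a^2*h^2/2)*((Real.exp h)^2*(1+c) - 2*Real.exp h + 1 - c)| ≤ a^2*(2*c+4)*h^3 := by
    rw [abs_mul, abs_of_nonneg (by positivity : (0:ℝ) ≤ a^2*h^2/2)]
    calc (a^2*h^2/2)*|(Real.exp h)^2*(1+c) - 2*Real.exp h + 1 - c|
        ≤ (a^2*h^2/2)*((4*c+8)*h) := mul_le_mul_of_nonneg_left hE2 (by positivity)
      _ = a^2*(2*c+4)*h^3 := by ring
  have hfirst : |(∫ ω, Real.log (1 + a*h*(s*Real.exp (β*W ω) - 1)))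
      - (a*h^2 - c*a^2*h^2/2)| ≤ C*h^3 := by
    rw [key]
    calc |a*h*(Real.exp h - 1 - h) - (a^2*h^2/2)*((Real.exp h)^2*(1+c) - 2*Real.exp h + 1 - c)
          + ∫ ω, (Real.log (1 + a*h*(s*Real.exp (β*W ω) - 1))
            - (a*h*(s*Real.exp (β*W ω) - 1) - (a*h*(s*Real.exp (β*W ω) - 1))^2/2))|
        ≤ |a*h*(Real.exp h - 1 - h)| + |(a^2*h^2/2)*((Real.exp h)^2*(1+c) - 2*Real.exp h + 1 - c)|
          + |∫ ω, (Real.log (1 + a*h*(s*Real.exp (β*W ω) - 1))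
            - (a*h*(s*Real.exp (β*W ω) - 1) - (a*h*(s*Real.exp (β*W ω) - 1))^2/2))| :=
          aux_abs3 _ _ _
      _ ≤ a*h^3 + a^2*(2*c+4)*h^3 + 8*a^3*K*h^3 := by linarith
      _ = C*h^3 := by rw [hC_def]; ring
  refine ⟨hfirst, ?_⟩
  have hT : a*h^2 - c*a^2*h^2/2 = h^2/(2*c) := by
    rw [ha_def]; field_simp; ring
  obtain ⟨hf1, hf2'⟩ := abs_le.mp hfirst
  have hlow : h^2/(2*c) - C*h^3 ≤ ∫ ω, Real.log (1 + a*h*(s*Real.exp (β*W ω) - 1)) := by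
    rw [← hT]; linarith
  have hch : C*h ≤ 1/(4*c) := by
    calc C*h ≤ C*(1/(4*c*C)) := mul_le_mul_of_nonneg_left hhC hC.le
      _ = 1/(4*c) := by field_simp
  have h2 : C*h^3 ≤ h^2/(4*c) := by
    calc C*h^3 = (C*h)*h^2 := by ring
      _ ≤ (1/(4*c))*h^2 := mul_le_mul_of_nonneg_right hch (sq_nonneg h)
      _ = h^2/(4*c) := by ring
  have h3 : h^2/(2*c) - h^2/(4*c) = h^2/(4*c) := by field_simp; ring
  linarith
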